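/- Let (X,d) be a metric space. Then there exists L ≥ 1 such that (X,d) is L-bi-Lipschitz equivalent to an ultrametric space if and only if there exists C ≥ 1 such that every finite subspace of (X,d) supports a C-separated tree structure. -/

import Mathlib

/-- `ρ` is a metric on the set `X`. -/
def IsMetricOn {X : Type*} (ρ : X → X → ℝ) : Prop :=
  (∀ x y, 0 ≤ ρ x y) ∧ (∀ x y, ρ x y = 0 ↔ x = y) ∧ (∀ x y, ρ x y = ρ y x) ∧
    ∀ x y z, ρ x z ≤ ρ x y + ρ y z

/-- A `C`-separated tree structure on a metric space `X`: a family of subsets indexed by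
finite 0-1 sequences (`List Bool`, with `α ⌢ δ = α ++ [δ]` and "ancestor" = list prefix)
such that (1) the root is `X`; (2) any two distinct points are separated by two
incomparable indices; (3) each set is the union of its two children; (4) children of a
set with more than one point are nonempty; (5) `diam A_α ≤ C · dist(A_{α⌢0}, A_{α⌢1})`
whenever `A_α` has more than one point (expressed pointwise). -/
structure SepTreeStructure (X : Type*) [PseudoMetricSpace X] (C : ℝ)
    (A : List Bool → Set X) : Prop where
  root : A [] = Set.univ
  separates : ∀ x y : X, x ≠ y → ∃ α β : List Bool,
    ¬ α <+: β ∧ ¬ β <+: α ∧ x ∈ A α ∧ y ∈ A β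
  partition : ∀ α : List Bool, A α = A (α ++ [false]) ∪ A (α ++ [true])
  children_nonempty : ∀ α : List Bool, (A α).Nontrivial →
    (A (α ++ [false])).Nonempty ∧ (A (α ++ [true])).Nonempty
  gap : ∀ α : List Bool, (A α).Nontrivial →
    ∀ a ∈ A (α ++ [false]), ∀ b ∈ A (α ++ [true]),
      Metric.diam (A α) ≤ C * dist a b

/-! ### Auxiliary list lemmas -/

lemma aux_incomp {γ : List Bool} {a b : Bool} (hab : a ≠ b) :
    ¬ (γ ++ [a] <+: γ ++ [b]) := by
  intro h
  have hlen : (γ ++ [a]).length = (γ ++ [b]).length := by simp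
  have heq := h.eq_of_length hlen
  have : a = b := by
    have := List.append_cancel_left heq
    simpa using this
  exact hab this

lemma aux_prefix_split : ∀ (μ ν : List Bool), ¬ μ <+: ν → ¬ ν <+: μ →
    ∃ γ a b, a ≠ b ∧ γ ++ [a] <+: μ ∧ γ ++ [b] <+: ν := by
  intro μ
  induction μ with
  | nil => intro ν h _; exact absurd (List.nil_prefix) h
  | cons m μ' ih =>
    intro ν h1 h2
    cases ν with
    | nil => exact absurd (List.nil_prefix) h2
    | cons v ν' =>
      by_cases hmv : m = v
      · subst hmv
        have h1' : ¬ μ' <+: ν' := fun hp => h1 (List.cons_prefix_cons.2 ⟨rfl, hp⟩)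
        have h2' : ¬ ν' <+: μ' := fun hp => h2 (List.cons_prefix_cons.2 ⟨rfl, hp⟩)
        obtain ⟨γ, a, b, hab, hpa, hpb⟩ := ih ν' h1' h2'
        refine ⟨m :: γ, a, b, hab, ?_, ?_⟩
        · rw [List.cons_append]; exact List.cons_prefix_cons.2 ⟨rfl, hpa⟩
        · rw [List.cons_append]; exact List.cons_prefix_cons.2 ⟨rfl, hpb⟩
      · refine ⟨[], m, v, hmv, ?_, ?_⟩
        · rw [List.nil_append]; exact List.cons_prefix_cons.2 ⟨rfl, List.nil_prefix⟩
        · rw [List.nil_append]; exact List.cons_prefix_cons.2 ⟨rfl, List.nil_prefix⟩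

lemma aux_exists_transition (P : ℕ → Prop) : ∀ n, P 0 → ¬ P n →
    ∃ j, j < n ∧ P j ∧ ¬ P (j + 1) := by
  intro n
  induction n with
  | zero => intro h hn; exact absurd h hn
  | succ n ih =>
    intro h0 hn
    by_cases hPn : P n
    · exact ⟨n, Nat.lt_succ_self n, hPn, hn⟩
    · obtain ⟨j, hj, hp1, hp2⟩ := ih h0 hPn
      exact ⟨j, hj.trans (Nat.lt_succ_self n), hp1, hp2⟩

/-! ### Basic facts about separated tree structures -/

lemma SepTreeStructure.subset_append {Y : Type*} [PseudoMetricSpace Y] {C : ℝ}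
    {A : List Bool → Set Y} (h : SepTreeStructure Y C A) :
    ∀ (δ α : List Bool), A (α ++ δ) ⊆ A α := by
  intro δ
  induction δ with
  | nil => intro α; simp
  | cons b δ' ih =>
    intro α
    have h1 : α ++ b :: δ' = (α ++ [b]) ++ δ' := by simp
    rw [h1]
    refine (ih (α ++ [b])).trans ?_
    rw [h.partition α]
    cases b
    · exact Set.subset_union_left
    · exact Set.subset_union_right

lemma SepTreeStructure.subset_of_prefix {Y : Type*} [PseudoMetricSpace Y] {C : ℝ}
    {A : List Bool → Set Y} (h : SepTreeStructure Y C A) {α β : List Bool}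
    (hpre : α <+: β) : A β ⊆ A α := by
  obtain ⟨t, rfl⟩ := hpre
  exact h.subset_append t α

/-- The key "exit" estimate: if `x ≠ y` both lie in `A γ`, `γ <+: δ` with
`δ` at most one longer, `p ∈ A δ` and `q ∉ A δ`, then `dist x y ≤ C * dist p q`. -/
lemma SepTreeStructure.exit_bound {Y : Type*} [PseudoMetricSpace Y] [Finite Y] {C : ℝ}
    {A : List Bool → Set Y} (h : SepTreeStructure Y C A)
    {γ δ : List Bool} (hpre : γ <+: δ) (hlen : δ.length ≤ γ.length + 1)
    {x y p q : Y} (hx : x ∈ A γ) (hy : y ∈ A γ) (hxy : x ≠ y)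
    (hp : p ∈ A δ) (hq : q ∉ A δ) :
    dist x y ≤ C * dist p q := by
  classical
  have hδne : δ ≠ [] := by rintro rfl; exact hq (by rw [h.root]; trivial)
  have hlen0 : 0 < δ.length := List.length_pos_iff.2 hδne
  have hPtop : q ∉ A (δ.take ((δ.length - 1) + 1)) := by
    rwa [Nat.sub_add_cancel hlen0, List.take_length]
  have hPex : ∃ k, q ∉ A (δ.take (k + 1)) := ⟨δ.length - 1, hPtop⟩
  set k := Nat.find hPex with hk
  have hk1 : q ∉ A (δ.take (k + 1)) := Nat.find_spec hPex
  have hkle : k ≤ δ.length - 1 := Nat.find_le hPtop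
  have hklt : k < δ.length := lt_of_le_of_lt hkle (Nat.sub_lt hlen0 one_pos)
  have hqk : q ∈ A (δ.take k) := by
    rcases Nat.eq_zero_or_pos k with h0 | h0
    · rw [h0]; rw [List.take_zero, h.root]; trivial
    · have hmin := Nat.find_min hPex (show k - 1 < k from Nat.sub_lt h0 one_pos)
      rw [Nat.sub_add_cancel h0] at hmin
      exact not_not.1 hmin
  have hkγ : k ≤ γ.length := by
    have := hpre.length_le
    omega
  have htkγ : A γ ⊆ A (δ.take k) := by
    have heq : δ.take k = γ.take k := by
      obtain ⟨t, rfl⟩ := hpre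
      exact List.take_append_of_le_length hkγ
    rw [heq]
    exact h.subset_of_prefix (List.take_prefix k γ)
  have hxk : x ∈ A (δ.take k) := htkγ hx
  have hyk : y ∈ A (δ.take k) := htkγ hy
  have hnt : (A (δ.take k)).Nontrivial := ⟨x, hxk, y, hyk, hxy⟩
  have hsingle : δ.take (k + 1) = δ.take k ++ [δ.get ⟨k, hklt⟩] := by
    rw [← List.take_concat_get hklt, List.concat_eq_append]
    simp [List.get_eq_getElem]
  have hpk : p ∈ A (δ.take k ++ [δ.get ⟨k, hklt⟩]) := by
    rw [← hsingle]
    exact h.subset_of_prefix (List.take_prefix _ _) hp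
  have hqk1 : q ∉ A (δ.take k ++ [δ.get ⟨k, hklt⟩]) := by rw [← hsingle]; exact hk1
  have hq2 : q ∈ A (δ.take k ++ [false]) ∪ A (δ.take k ++ [true]) := by
    rw [← h.partition]; exact hqk
  have hdxy : dist x y ≤ Metric.diam (A (δ.take k)) :=
    Metric.dist_le_diam_of_mem (Set.toFinite _).isBounded hxk hyk
  cases hgb : δ.get ⟨k, hklt⟩ with
  | false =>
    rw [hgb] at hpk hqk1
    have hqtrue : q ∈ A (δ.take k ++ [true]) := hq2.resolve_left hqk1
    have := h.gap (δ.take k) hnt p hpk q hqtrue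
    exact hdxy.trans this
  | true =>
    rw [hgb] at hpk hqk1
    have hqfalse : q ∈ A (δ.take k ++ [false]) := hq2.resolve_right hqk1
    have := h.gap (δ.take k) hnt q hqfalse p hpk
    rw [dist_comm q p] at this
    exact hdxy.trans this

/-! ### The chain lemma -/

lemma chain_bound {X : Type*} [MetricSpace X] {C : ℝ} (hC : 1 ≤ C)
    (htree : ∀ S : Finset X,
      ∃ A : List Bool → Set {x // x ∈ S}, SepTreeStructure {x // x ∈ S} C A)
    (f : ℕ → X) (n : ℕ) (r : ℝ) (hr0 : 0 ≤ r)
    (hr : ∀ i < n, dist (f i) (f (i + 1)) ≤ r) :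
    dist (f 0) (f n) ≤ C * r := by
  classical
  by_cases hxy : f 0 = f n
  · rw [hxy, dist_self]; positivity
  set S : Finset X := (Finset.range (n + 1)).image f with hS
  obtain ⟨A, h⟩ := htree S
  have hmemS : ∀ i, i ≤ n → f i ∈ S := fun i hi =>
    Finset.mem_image.2 ⟨i, Finset.mem_range.2 (by omega), rfl⟩
  set F : ℕ → {x // x ∈ S} := fun i =>
    if hi : i ≤ n then ⟨f i, hmemS i hi⟩ else ⟨f 0, hmemS 0 (Nat.zero_le n)⟩ with hF
  have hFval : ∀ i, i ≤ n → (F i : X) = f i := by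
    intro i hi; simp only [hF, dif_pos hi]
  have hne : F 0 ≠ F n := by
    intro hEq
    apply hxy
    have hc := congrArg (Subtype.val) hEq
    rwa [hFval 0 (Nat.zero_le n), hFval n le_rfl] at hc
  obtain ⟨μ, ν, hμν, hνμ, hxμ, hyν⟩ := h.separates (F 0) (F n) hne
  obtain ⟨γ, a, b, hab, hpa, hpb⟩ := aux_prefix_split μ ν hμν hνμ
  have hx : F 0 ∈ A (γ ++ [a]) := h.subset_of_prefix hpa hxμ
  have hy : F n ∈ A (γ ++ [b]) := h.subset_of_prefix hpb hyν
  have hxγ : F 0 ∈ A γ := h.subset_append [a] γ hx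
  have hyγ : F n ∈ A γ := h.subset_append [b] γ hy
  have hnt : (A γ).Nontrivial := ⟨_, hxγ, _, hyγ, hne⟩
  have hyna : F n ∉ A (γ ++ [a]) := by
    intro hyA
    have hgap : Metric.diam (A γ) ≤ C * dist (F n) (F n) := by
      cases a
      · cases b
        · exact absurd rfl hab
        · exact h.gap γ hnt _ hyA _ hy
      · cases b
        · exact h.gap γ hnt _ hy _ hyA
        · exact absurd rfl hab
    rw [dist_self, mul_zero] at hgap
    have hdd : dist (F 0) (F n) ≤ Metric.diam (A γ) :=
      Metric.dist_le_diam_of_mem (Set.toFinite _).isBounded hxγ hyγ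
    exact hne (dist_le_zero.1 (hdd.trans hgap))
  obtain ⟨j, hjn, hPj, hPj1⟩ :=
    aux_exists_transition (fun j => F j ∈ A (γ ++ [a])) n hx hyna
  have hbound : dist (F 0) (F n) ≤ C * dist (F j) (F (j + 1)) :=
    h.exit_bound ⟨[a], rfl⟩ (by simp) hxγ hyγ hne hPj hPj1
  rw [Subtype.dist_eq, Subtype.dist_eq] at hbound
  rw [hFval 0 (Nat.zero_le n), hFval n le_rfl, hFval j (le_of_lt hjn), hFval (j + 1) hjn]
    at hbound
  have hstep : dist (f j) (f (j + 1)) ≤ r := hr j hjn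
  have hCpos : (0 : ℝ) < C := lt_of_lt_of_le one_pos hC
  calc dist (f 0) (f n) ≤ C * dist (f j) (f (j + 1)) := hbound
    _ ≤ C * r := mul_le_mul_of_nonneg_left hstep hCpos.le

/-! ### Forward direction: from an ultrametric to tree structures on finite subspaces -/

lemma forward_tree {Y : Type*} [MetricSpace Y] [Finite Y] {L : ℝ} (hL : 1 ≤ L)
    (ρ : Y → Y → ℝ) (hm : IsMetricOn ρ) (hu : ∀ x y z, ρ x y ≤ max (ρ x z) (ρ z y))
    (hbnd : ∀ x y, dist x y / L ≤ ρ x y ∧ ρ x y ≤ L * dist x y) :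
    ∃ A : List Bool → Set Y, SepTreeStructure Y (L * L) A := by
  classical
  obtain ⟨hρ0, hρe, hρs, hρt⟩ := hm
  have hLpos : (0 : ℝ) < L := lt_of_lt_of_le one_pos hL
  have hdist : ∀ x y : Y, dist x y ≤ L * ρ x y := by
    intro x y
    have h1 := (hbnd x y).1
    rw [div_le_iff₀ hLpos] at h1
    linarith [h1]
  have hQex : ∀ T : Set Y, T.Nontrivial → ∃ p : Y × Y, p.1 ∈ T ∧ p.2 ∈ T ∧
      0 < ρ p.1 p.2 ∧ ∀ w ∈ T, ∀ w' ∈ T, ρ w w' ≤ ρ p.1 p.2 := by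
    rintro T ⟨a, ha, c, hc, hac⟩
    obtain ⟨p, hpmem, hpmax⟩ := Set.exists_max_image (T ×ˢ T) (fun p => ρ p.1 p.2)
      ((Set.toFinite T).prod (Set.toFinite T)) ⟨(a, c), ha, hc⟩
    refine ⟨p, hpmem.1, hpmem.2, ?_, fun w hw w' hw' => hpmax (w, w') ⟨hw, hw'⟩⟩
    have h1 : ρ a c ≤ ρ p.1 p.2 := hpmax (a, c) ⟨ha, hc⟩
    have h2 : ρ a c ≠ 0 := fun h0 => hac ((hρe a c).1 h0)
    have h3 : 0 < ρ a c := (hρ0 a c).lt_of_ne (Ne.symm h2)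
    exact h3.trans_le h1
  choose pick hpick using hQex
  set step : Set Y → Bool → Set Y := fun T b =>
    if hT : T.Nontrivial then
      if b then {y | y ∈ T ∧ ¬ ρ (pick T hT).1 y < ρ (pick T hT).1 (pick T hT).2}
      else {y | y ∈ T ∧ ρ (pick T hT).1 y < ρ (pick T hT).1 (pick T hT).2}
    else T
    with hstep
  set A : List Bool → Set Y := fun α => List.foldl step Set.univ α with hA
  have hAapp : ∀ α b, A (α ++ [b]) = step (A α) b := by
    intro α b
    simp only [hA, List.foldl_append, List.foldl_cons, List.foldl_nil]
  have eF : ∀ T (hT : T.Nontrivial), step T false =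
      {y | y ∈ T ∧ ρ (pick T hT).1 y < ρ (pick T hT).1 (pick T hT).2} := by
    intro T hT; simp [hstep, dif_pos hT]
  have eT : ∀ T (hT : T.Nontrivial), step T true =
      {y | y ∈ T ∧ ¬ ρ (pick T hT).1 y < ρ (pick T hT).1 (pick T hT).2} := by
    intro T hT; simp [hstep, dif_pos hT]
  have eN : ∀ T, ¬ T.Nontrivial → step T false = T ∧ step T true = T := by
    intro T hT
    constructor <;> simp [hstep, dif_neg hT]
  have hsub : ∀ T b, step T b ⊆ T := by
    intro T b z hz
    by_cases hT : T.Nontrivial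
    · cases b
      · rw [eF T hT] at hz; exact hz.1
      · rw [eT T hT] at hz; exact hz.1
    · cases b
      · rwa [(eN T hT).1] at hz
      · rwa [(eN T hT).2] at hz
  have hunion : ∀ T, step T false ∪ step T true = T := by
    intro T
    by_cases hT : T.Nontrivial
    · rw [eF T hT, eT T hT]
      ext z
      simp only [Set.mem_union, Set.mem_setOf_eq]
      tauto
    · rw [(eN T hT).1, (eN T hT).2, Set.union_self]
  have hmemchild : ∀ T (hT : T.Nontrivial), (pick T hT).1 ∈ step T false ∧
      (pick T hT).2 ∈ step T true ∧ (pick T hT).2 ∉ step T false ∧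
      (pick T hT).1 ∉ step T true := by
    intro T hT
    obtain ⟨h1, h2, h3, h4⟩ := hpick T hT
    have hz : ρ (pick T hT).1 (pick T hT).1 = 0 := (hρe _ _).2 rfl
    rw [eF T hT, eT T hT]
    simp only [Set.mem_setOf_eq]
    refine ⟨⟨h1, by rw [hz]; exact h3⟩, ⟨h2, lt_irrefl _⟩, fun h => lt_irrefl _ h.2,
      fun h => h.2 (by rw [hz]; exact h3)⟩
  have hgap : ∀ T (hT : T.Nontrivial), ∀ a ∈ step T false, ∀ b ∈ step T true,
      Metric.diam T ≤ (L * L) * dist a b := by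
    intro T hT a ha b hb
    obtain ⟨h1, h2, h3, h4⟩ := hpick T hT
    rw [eF T hT] at ha
    rw [eT T hT] at hb
    simp only [Set.mem_setOf_eq] at ha hb
    have hD : ρ (pick T hT).1 (pick T hT).2 ≤ ρ a b := by
      have h5 : ρ (pick T hT).1 b ≤ max (ρ (pick T hT).1 a) (ρ a b) := hu _ b a
      have h6 : ρ (pick T hT).1 (pick T hT).2 ≤ ρ (pick T hT).1 b := not_lt.1 hb.2
      rcases max_choice (ρ (pick T hT).1 a) (ρ a b) with hmc | hmc <;> rw [hmc] at h5
      · linarith [ha.2]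
      · linarith
    apply Metric.diam_le_of_forall_dist_le (by positivity)
    intro w hw w' hw'
    calc dist w w' ≤ L * ρ w w' := hdist w w'
      _ ≤ L * ρ (pick T hT).1 (pick T hT).2 :=
          mul_le_mul_of_nonneg_left (h4 w hw w' hw') hLpos.le
      _ ≤ L * ρ a b := mul_le_mul_of_nonneg_left hD hLpos.le
      _ ≤ L * (L * dist a b) := mul_le_mul_of_nonneg_left (hbnd a b).2 hLpos.le
      _ = (L * L) * dist a b := by ring
  have hsep : ∀ N : ℕ, ∀ α : List Bool, ∀ x y : Y, (A α).ncard ≤ N → x ≠ y →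
      x ∈ A α → y ∈ A α →
      ∃ μ ν : List Bool, ¬ μ <+: ν ∧ ¬ ν <+: μ ∧ x ∈ A μ ∧ y ∈ A ν := by
    intro N
    induction N with
    | zero =>
      intro α x y hcard hxy hx hy
      exfalso
      have hpos : 0 < (A α).ncard := (Set.ncard_pos (Set.toFinite _)).2 ⟨x, hx⟩
      omega
    | succ N ih =>
      intro α x y hcard hxy hx hy
      have hT : (A α).Nontrivial := ⟨x, hx, y, hy, hxy⟩
      obtain ⟨hc1, hc2, hc3, hc4⟩ := hmemchild (A α) hT
      have hxin : x ∈ step (A α) false ∪ step (A α) true := by rw [hunion]; exact hx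
      have hyin : y ∈ step (A α) false ∪ step (A α) true := by rw [hunion]; exact hy
      have hproper : ∀ b, (step (A α) b).ncard ≤ N := by
        intro b
        have hss : step (A α) b ⊂ A α := by
          refine ⟨hsub _ _, fun hcontra => ?_⟩
          cases b
          · exact hc3 (hcontra (hsub _ _ hc2))
          · exact hc4 (hcontra (hsub _ _ hc1))
        have := Set.ncard_lt_ncard hss (Set.toFinite _)
        omega
      rcases hxin with hx0 | hx1 <;> rcases hyin with hy0 | hy1
      · exact ih (α ++ [false]) x y (by rw [hAapp]; exact hproper false) hxy
          (by rw [hAapp]; exact hx0) (by rw [hAapp]; exact hy0)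
      · exact ⟨α ++ [false], α ++ [true], aux_incomp (by simp), aux_incomp (by simp),
          by rw [hAapp]; exact hx0, by rw [hAapp]; exact hy1⟩
      · exact ⟨α ++ [true], α ++ [false], aux_incomp (by simp), aux_incomp (by simp),
          by rw [hAapp]; exact hx1, by rw [hAapp]; exact hy0⟩
      · exact ih (α ++ [true]) x y (by rw [hAapp]; exact hproper true) hxy
          (by rw [hAapp]; exact hx1) (by rw [hAapp]; exact hy1)
  have hroot : A [] = Set.univ := by simp [hA]
  refine ⟨A, hroot, ?_, ?_, ?_, ?_⟩
  · intro x y hxy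
    exact hsep (A []).ncard [] x y le_rfl hxy (by rw [hroot]; trivial)
      (by rw [hroot]; trivial)
  · intro α
    rw [hAapp, hAapp, hunion]
  · intro α hnt
    rw [hAapp, hAapp]
    obtain ⟨hc1, hc2, _, _⟩ := hmemchild (A α) hnt
    exact ⟨⟨_, hc1⟩, ⟨_, hc2⟩⟩
  · intro α hnt a ha b hb
    rw [hAapp] at ha hb
    exact hgap (A α) hnt a ha b hb

theorem biLip_ultrametric_iff_finite_sepTree {X : Type*} [MetricSpace X] :
    (∃ L : ℝ, 1 ≤ L ∧ ∃ ρ : X → X → ℝ, IsMetricOn ρ ∧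
      (∀ x y z : X, ρ x y ≤ max (ρ x z) (ρ z y)) ∧
      ∀ x y : X, dist x y / L ≤ ρ x y ∧ ρ x y ≤ L * dist x y) ↔
    (∃ C : ℝ, 1 ≤ C ∧ ∀ S : Finset X,
      ∃ A : List Bool → Set {x // x ∈ S}, SepTreeStructure {x // x ∈ S} C A) := by
  constructor
  · rintro ⟨L, hL, ρ, hm, hu, hb⟩
    refine ⟨L * L, by nlinarith, ?_⟩
    intro S
    refine forward_tree hL (fun a b : {x // x ∈ S} => ρ a b) ?_ ?_ ?_
    · obtain ⟨h0, he, hs, ht⟩ := hm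
      refine ⟨fun a b => h0 a b, fun a b => ?_, fun a b => hs a b, fun a b c => ht a b c⟩
      rw [he]
      exact ⟨fun h => Subtype.ext h, fun h => congrArg Subtype.val h⟩
    · exact fun a b c => hu a b c
    · intro a b
      rw [Subtype.dist_eq]
      exact hb a b
  · rintro ⟨C, hC, htree⟩
    have hCpos : (0 : ℝ) < C := lt_of_lt_of_le one_pos hC
    set E : X → X → Set ℝ := fun x y => {r : ℝ | 0 ≤ r ∧ ∃ n : ℕ, ∃ f : ℕ → X,
      f 0 = x ∧ f n = y ∧ ∀ i < n, dist (f i) (f (i + 1)) ≤ r} with hE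
    have hmemE : ∀ x y, dist x y ∈ E x y := by
      intro x y
      refine ⟨dist_nonneg, 1, fun i => if i = 0 then x else y, by simp, by simp, ?_⟩
      intro i hi
      interval_cases i
      simp
    have hEbdd : ∀ x y, BddBelow (E x y) := fun x y => ⟨0, fun r hr => hr.1⟩
    have hEne : ∀ x y, (E x y).Nonempty := fun x y => ⟨_, hmemE x y⟩
    have hkey : ∀ x y, ∀ r ∈ E x y, dist x y ≤ C * r := by
      rintro x y r ⟨hr0, n, f, hf0, hfn, hfr⟩
      rw [← hf0, ← hfn]
      exact chain_bound hC htree f n r hr0 hfr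
    set u : X → X → ℝ := fun x y => sInf (E x y) with hu
    have hu0 : ∀ x y, 0 ≤ u x y := fun x y => le_csInf (hEne x y) (fun r hr => hr.1)
    have hud : ∀ x y, dist x y ≤ C * u x y := by
      intro x y
      have h1 : dist x y / C ≤ u x y := by
        refine le_csInf (hEne x y) (fun r hr => ?_)
        rw [div_le_iff₀ hCpos]
        rw [mul_comm]
        exact hkey x y r hr
      rw [div_le_iff₀ hCpos] at h1
      rw [mul_comm] at h1
      exact h1
    have hule : ∀ x y, u x y ≤ dist x y := fun x y => csInf_le (hEbdd x y) (hmemE x y)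
    have huxx : ∀ x, u x x = 0 := by
      intro x
      refine le_antisymm ?_ (hu0 x x)
      exact csInf_le (hEbdd x x)
        ⟨le_refl 0, 0, fun _ => x, rfl, rfl, fun i hi => absurd hi (Nat.not_lt_zero i)⟩
    have hEsymm : ∀ x y, E x y ⊆ E y x := by
      rintro x y r ⟨hr0, n, f, hf0, hfn, hfr⟩
      refine ⟨hr0, n, fun i => f (n - i), by simp [hfn], by simp [hf0], ?_⟩
      intro i hi
      have h1 : n - i = (n - (i + 1)) + 1 := by omega
      show dist (f (n - i)) (f (n - (i + 1))) ≤ r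
      rw [dist_comm, h1]
      exact hfr (n - (i + 1)) (by omega)
    have husymm : ∀ x y, u x y = u y x := fun x y =>
      le_antisymm (csInf_le_csInf (hEbdd x y) (hEne y x) (hEsymm y x))
        (csInf_le_csInf (hEbdd y x) (hEne x y) (hEsymm x y))
    have hultra : ∀ x y z, u x y ≤ max (u x z) (u z y) := by
      intro x y z
      refine le_of_forall_pos_le_add ?_
      intro ε hε
      obtain ⟨r, hrE, hrlt⟩ := exists_lt_of_csInf_lt (hEne x z)
        (lt_add_of_pos_right (u x z) hε)
      obtain ⟨s, hsE, hslt⟩ := exists_lt_of_csInf_lt (hEne z y)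
        (lt_add_of_pos_right (u z y) hε)
      obtain ⟨hr0, n, f, hf0, hfn, hfr⟩ := hrE
      obtain ⟨hs0, m, g, hg0, hgm, hgs⟩ := hsE
      have hjoin : max r s ∈ E x y := by
        refine ⟨le_trans hr0 (le_max_left r s), n + m,
          fun i => if i ≤ n then f i else g (i - n), by simp [hf0], ?_, ?_⟩
        · by_cases hm : m = 0
          · subst hm
            simp only [Nat.add_zero, le_refl, if_pos]
            rw [hfn, ← hg0, hgm]
          · have hc : ¬ (n + m ≤ n) := by omega
            simp only [if_neg hc]
            have : n + m - n = m := by omega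
            rw [this, hgm]
        · intro i hi
          by_cases hin : i + 1 ≤ n
          · have h2 : i ≤ n := by omega
            simp only [if_pos h2, if_pos hin]
            exact (hfr i (by omega)).trans (le_max_left r s)
          · by_cases hie : i ≤ n
            · have hieq : i = n := by omega
              subst hieq
              simp only [if_pos le_rfl, if_neg hin]
              have h2 : i + 1 - i = 1 := by omega
              rw [h2, hfn, ← hg0]
              exact (hgs 0 (by omega)).trans (le_max_right r s)
            · simp only [if_neg hie, if_neg hin]
              have h3 : i + 1 - n = (i - n) + 1 := by omega
              rw [h3]
              exact (hgs (i - n) (by omega)).trans (le_max_right r s)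
      have h4 := csInf_le (hEbdd x y) hjoin
      refine h4.trans (max_le ?_ ?_)
      · exact hrlt.le.trans (add_le_add (le_max_left _ _) le_rfl)
      · exact hslt.le.trans (add_le_add (le_max_right _ _) le_rfl)
    refine ⟨C, hC, fun x y => C * u x y, ⟨?_, ?_, ?_, ?_⟩, ?_, ?_⟩
    · exact fun x y => mul_nonneg hCpos.le (hu0 x y)
    · intro x y
      constructor
      · intro h0
        have h1 : C * u x y = 0 := h0
        have h2 := hud x y
        rw [h1] at h2
        exact dist_le_zero.1 h2
      · rintro rfl
        show C * u x x = 0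
        rw [huxx, mul_zero]
    · intro x y
      show C * u x y = C * u y x
      rw [husymm]
    · intro x y z
      have h1 : C * u x z ≤ C * max (u x y) (u y z) :=
        mul_le_mul_of_nonneg_left (hultra x z y) hCpos.le
      have h2 : max (u x y) (u y z) ≤ u x y + u y z :=
        max_le_add_of_nonneg (hu0 x y) (hu0 y z)
      have h3 : C * max (u x y) (u y z) ≤ C * (u x y + u y z) :=
        mul_le_mul_of_nonneg_left h2 hCpos.le
      show C * u x z ≤ C * u x y + C * u y z
      nlinarith
    · intro x y z
      show C * u x y ≤ max (C * u x z) (C * u z y)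
      rw [← mul_max_of_nonneg _ _ hCpos.le]
      exact mul_le_mul_of_nonneg_left (hultra x y z) hCpos.le
    · intro x y
      constructor
      · exact (div_le_self dist_nonneg hC).trans (hud x y)
      · exact mul_le_mul_of_nonneg_left (hule x y) hCpos.le
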